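/- For every positive integer N there exist positive integers s, r with x = s·log q / log(1 + 1/r), an x-semi-superior highly composite polynomial h ∈ 𝔽_q[t], and an integer u with 0 ≤ u ≤ s − 1, such that N = deg h − u. -/

import Mathlib

open Polynomial

/-- The number of monic divisors of a polynomial. -/
noncomputable def tau {Fq : Type} [Field Fq] (f : Fq[X]) : ℕ :=
  {d : Fq[X] | d.Monic ∧ d ∣ f}.ncard

/-- `h` is an `x`-semi-superior highly composite polynomial. -/
noncomputable def IsSSHC {Fq : Type} [Field Fq] [Fintype Fq] (x : ℝ) (h : Fq[X]) : Prop :=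
  h.Monic ∧ ∀ f : Fq[X], f.Monic →
    (tau f : ℝ) * (Fintype.card Fq : ℝ) ^ (-(f.natDegree : ℝ) / x) ≤
    (tau h : ℝ) * (Fintype.card Fq : ℝ) ^ (-(h.natDegree : ℝ) / x)


open UniqueFactorizationMonoid Finset

section AuxMachinery

lemma count_finset_sum {α β : Type*} [DecidableEq α] (s : Finset β) (f : β → Multiset α)
    (a : α) : Multiset.count a (∑ b ∈ s, f b) = ∑ b ∈ s, Multiset.count a (f b) :=
  map_sum (Multiset.countAddMonoidHom a) f s

/-- Number of sub-multisets of a multiset. -/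
lemma card_powerset_toFinset {α : Type*} [DecidableEq α] (s : Multiset α) :
    s.powerset.toFinset.card = ∏ a ∈ s.toFinset, (s.count a + 1) := by
  have key : ∀ (k : {x // x ∈ s.toFinset} → ℕ) (a : α) (ha : a ∈ s.toFinset),
      (∑ b ∈ s.toFinset.attach, k b * (if a = ↑b then 1 else 0)) = k ⟨a, ha⟩ := by
    intro k a ha
    rw [Finset.sum_eq_single (⟨a, ha⟩ : {x // x ∈ s.toFinset})]
    · simp
    · intro b _ hb
      have hne : a ≠ ↑b := fun h => hb (Subtype.ext h.symm)
      simp [hne]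
    · intro h; exact absurd (Finset.mem_attach _ _) h
  have key0 : ∀ (k : {x // x ∈ s.toFinset} → ℕ) (a : α), a ∉ s.toFinset →
      (∑ b ∈ s.toFinset.attach, k b * (if a = ↑b then 1 else 0)) = 0 := by
    intro k a ha
    apply Finset.sum_eq_zero
    intro b _
    have hne : a ≠ ↑b := fun h => ha (h ▸ b.2)
    simp [hne]
  have hpi : ∏ a ∈ s.toFinset, (s.count a + 1) =
      (s.toFinset.pi fun a => Finset.range (s.count a + 1)).card := by
    rw [Finset.card_pi]; simp
  rw [hpi]
  apply Finset.card_bij' (fun t _ => fun a _ => t.count a)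
    (fun g _ => ∑ a ∈ s.toFinset.attach, (g a.1 a.2) • ({a.1} : Multiset α))
  · intro t ht
    rw [Finset.mem_pi]
    intro a ha
    rw [Multiset.mem_toFinset, Multiset.mem_powerset] at ht
    rw [Finset.mem_range, Nat.lt_succ_iff]
    exact Multiset.le_iff_count.mp ht a
  · intro g hg
    rw [Multiset.mem_toFinset, Multiset.mem_powerset, Multiset.le_iff_count]
    intro a
    rw [count_finset_sum]
    simp only [Multiset.count_nsmul, Multiset.count_singleton]
    by_cases ha : a ∈ s.toFinset
    · rw [key (fun b => g b.1 b.2) a ha]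
      have := Finset.mem_pi.mp hg a ha
      rw [Finset.mem_range, Nat.lt_succ_iff] at this
      exact this
    · rw [key0 (fun b => g b.1 b.2) a ha]
      exact Nat.zero_le _
  · intro t ht
    rw [Multiset.mem_toFinset, Multiset.mem_powerset] at ht
    ext a
    rw [count_finset_sum]
    simp only [Multiset.count_nsmul, Multiset.count_singleton]
    by_cases ha : a ∈ s.toFinset
    · rw [key (fun b => t.count b.1) a ha]
    · rw [key0 (fun b => t.count b.1) a ha]
      symm
      rw [Multiset.count_eq_zero]
      intro hmem
      exact ha (Multiset.mem_toFinset.mpr (Multiset.mem_of_le ht hmem))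
  · intro g hg
    funext a ha
    rw [count_finset_sum]
    simp only [Multiset.count_nsmul, Multiset.count_singleton]
    rw [key (fun b => g b.1 b.2) a ha]

variable {Fq : Type} [Field Fq] [DecidableEq Fq]

lemma monic_of_normalized {p : Fq[X]} (hp : p ≠ 0) (h : normalize p = p) : p.Monic := by
  classical
  exact h ▸ Polynomial.monic_normalize hp

lemma monic_prod_of_nf {t m : Multiset Fq[X]} (ht : t ≤ m) {f : Fq[X]} (hf : f ≠ 0)
    (hm : m = normalizedFactors f) : t.prod.Monic := by
  have H := Polynomial.monic_multiset_prod_of_monic t id (fun p hp => ?_)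
  · simpa using H
  have hmem : p ∈ normalizedFactors f := hm ▸ Multiset.mem_of_le ht hp
  exact monic_of_normalized (irreducible_of_normalized_factor p hmem).ne_zero
    (normalize_normalized_factor p hmem)

lemma prod_nf_eq {f : Fq[X]} (hf : f.Monic) :
    (normalizedFactors f).prod = f := by
  apply Polynomial.eq_of_monic_of_associated _ hf (prod_normalizedFactors hf.ne_zero)
  exact monic_prod_of_nf le_rfl hf.ne_zero rfl

lemma nf_of_sub {f : Fq[X]} (hf : f.Monic) {t : Multiset Fq[X]}
    (ht : t ≤ normalizedFactors f) : normalizedFactors t.prod = t := by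
  rw [normalizedFactors_prod_eq _
    (fun p hp => irreducible_of_normalized_factor p (Multiset.mem_of_le ht hp))]
  rw [Multiset.map_congr rfl
    (fun p hp => normalize_normalized_factor p (Multiset.mem_of_le ht hp))]
  exact Multiset.map_id t

lemma tau_formula (f : Fq[X]) (hf : f.Monic) :
    tau f = ∏ P ∈ (normalizedFactors f).toFinset,
      ((normalizedFactors f).count P + 1) := by
  classical
  have hf0 : f ≠ 0 := hf.ne_zero
  have hDiv : {d : Fq[X] | d.Monic ∧ d ∣ f} =
      ↑((normalizedFactors f).powerset.toFinset.image Multiset.prod) := by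
    ext d
    simp only [Set.mem_setOf_eq, coe_image, Set.mem_image, mem_coe, Multiset.mem_toFinset,
      Multiset.mem_powerset]
    constructor
    · rintro ⟨hd, hdvd⟩
      refine ⟨normalizedFactors d, ?_, prod_nf_eq hd⟩
      exact (dvd_iff_normalizedFactors_le_normalizedFactors hd.ne_zero hf0).mp hdvd
    · rintro ⟨t, ht, rfl⟩
      refine ⟨monic_prod_of_nf ht hf0 rfl, ?_⟩
      calc t.prod ∣ (normalizedFactors f).prod := Multiset.prod_dvd_prod_of_le ht
        _ = f := prod_nf_eq hf
  rw [tau, hDiv, Set.ncard_coe_finset, Finset.card_image_of_injOn, card_powerset_toFinset]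
  intro t1 h1 t2 h2 heq
  rw [mem_coe, Multiset.mem_toFinset, Multiset.mem_powerset] at h1 h2
  rw [← nf_of_sub hf h1, heq, nf_of_sub hf h2]

section ProdPow
variable {Fq : Type} [Field Fq] [DecidableEq Fq]

lemma monic_prod_pow (S : Finset Fq[X]) (E : Fq[X] → ℕ)
    (hS : ∀ P ∈ S, P.Monic) : (∏ P ∈ S, P ^ E P).Monic :=
  monic_prod_of_monic _ _ (fun P hP => (hS P hP).pow _)

lemma nf_prod_pow (S : Finset Fq[X]) (E : Fq[X] → ℕ)
    (hS : ∀ P ∈ S, P.Monic ∧ Irreducible P) :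
    normalizedFactors (∏ P ∈ S, P ^ E P) = ∑ P ∈ S, Multiset.replicate (E P) P := by
  classical
  induction S using Finset.induction with
  | empty => simpa using normalizedFactors_one
  | @insert a S ha ih =>
    rw [Finset.prod_insert ha, Finset.sum_insert ha]
    have hmon : ∀ P ∈ S, P.Monic ∧ Irreducible P := fun P hP => hS P (Finset.mem_insert_of_mem hP)
    have haS := hS a (Finset.mem_insert_self a S)
    have h1 : (a ^ E a) ≠ 0 := (haS.1.pow _).ne_zero
    have h2 : (∏ P ∈ S, P ^ E P) ≠ 0 := (monic_prod_pow S E (fun P hP => (hmon P hP).1)).ne_zero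
    rw [normalizedFactors_mul h1 h2, ih hmon, haS.2.normalizedFactors_pow,
      haS.1.normalize_eq_self]

lemma count_nf_prod_pow (S : Finset Fq[X]) (E : Fq[X] → ℕ)
    (hS : ∀ P ∈ S, P.Monic ∧ Irreducible P) (a : Fq[X]) :
    (normalizedFactors (∏ P ∈ S, P ^ E P)).count a = if a ∈ S then E a else 0 := by
  classical
  rw [nf_prod_pow S E hS, count_finset_sum]
  by_cases ha : a ∈ S
  · rw [Finset.sum_eq_single a (fun b _ hb => by
      rw [Multiset.count_replicate, if_neg hb]) (fun h => absurd ha h)]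
    simp [Multiset.count_replicate, ha]
  · rw [if_neg ha]
    apply Finset.sum_eq_zero
    intro b hb
    rw [Multiset.count_replicate]
    exact if_neg (fun h => ha (by rw [← h]; exact hb))

lemma toFinset_nf_prod_pow (S : Finset Fq[X]) (E : Fq[X] → ℕ)
    (hS : ∀ P ∈ S, P.Monic ∧ Irreducible P) :
    (normalizedFactors (∏ P ∈ S, P ^ E P)).toFinset ⊆ S := by
  classical
  intro a ha
  rw [Multiset.mem_toFinset, nf_prod_pow S E hS, Multiset.mem_sum] at ha
  obtain ⟨P, hP, hmem⟩ := ha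
  have heq : a = P := Multiset.eq_of_mem_replicate hmem
  exact heq ▸ hP

lemma tau_prod_pow (S : Finset Fq[X]) (E : Fq[X] → ℕ)
    (hS : ∀ P ∈ S, P.Monic ∧ Irreducible P) :
    tau (∏ P ∈ S, P ^ E P) = ∏ P ∈ S, (E P + 1) := by
  classical
  rw [tau_formula _ (monic_prod_pow S E (fun P hP => (hS P hP).1))]
  rw [Finset.prod_subset (toFinset_nf_prod_pow S E hS)]
  · apply Finset.prod_congr rfl
    intro P hP
    rw [count_nf_prod_pow S E hS, if_pos hP]
  · intro P hP hP'
    have hnotmem : P ∉ normalizedFactors (∏ Q ∈ S, Q ^ E Q) :=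
      fun h => hP' (Multiset.mem_toFinset.mpr h)
    have hc0 : (normalizedFactors (∏ Q ∈ S, Q ^ E Q)).count P = 0 :=
      Multiset.count_eq_zero.mpr hnotmem
    rw [count_nf_prod_pow S E hS, if_pos hP] at hc0
    rw [count_nf_prod_pow S E hS, if_pos hP, hc0]
    rfl

lemma deg_prod_pow (S : Finset Fq[X]) (E : Fq[X] → ℕ)
    (hS : ∀ P ∈ S, P.Monic) :
    (∏ P ∈ S, P ^ E P).natDegree = ∑ P ∈ S, E P * P.natDegree := by
  rw [natDegree_prod_of_monic _ _ (fun P hP => (hS P hP).pow _)]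
  exact Finset.sum_congr rfl (fun P hP => by rw [natDegree_pow])

lemma deg_eq_sum_nf {f : Fq[X]} (hf : f.Monic) :
    f.natDegree = ∑ P ∈ (normalizedFactors f).toFinset,
      (normalizedFactors f).count P * P.natDegree := by
  classical
  conv_lhs => rw [← prod_nf_eq hf]
  rw [natDegree_multiset_prod_of_monic _ (fun p hp =>
    monic_of_normalized (irreducible_of_normalized_factor p hp).ne_zero
      (normalize_normalized_factor p hp))]
  rw [Finset.sum_multiset_map_count]
  simp [Finset.sum_congr]

end ProdPow

section Opt

lemma opt_ge {t : ℝ} (ht0 : 0 < t) {E : ℕ} (h2 : (E : ℝ) + 2 ≤ ((E : ℝ) + 1) * t) (k : ℕ) :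
    ((E : ℝ) + k + 1) * t ^ E ≤ ((E : ℝ) + 1) * t ^ (E + k) := by
  induction k with
  | zero => simp
  | succ k ih =>
    have hE1 : (0:ℝ) < (E:ℝ) + 1 := by positivity
    have step : ((E : ℝ) + k + 2) ≤ ((E : ℝ) + k + 1) * t := by
      rw [show ((E:ℝ) + k + 1) * t = ((E:ℝ)+k+1)/((E:ℝ)+1) * (((E:ℝ)+1)*t) by field_simp]
      have h3 : ((E:ℝ)+k+1)/((E:ℝ)+1) * ((E:ℝ)+2) ≤ ((E:ℝ)+k+1)/((E:ℝ)+1) * (((E:ℝ)+1)*t) := by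
        apply mul_le_mul_of_nonneg_left h2 (by positivity)
      refine le_trans ?_ h3
      rw [div_mul_eq_mul_div, le_div_iff₀ hE1]
      nlinarith [Nat.cast_nonneg (α := ℝ) k, Nat.cast_nonneg (α := ℝ) E]
    have ih' := mul_le_mul_of_nonneg_right ih (le_of_lt ht0)
    have step' := mul_le_mul_of_nonneg_right step (pow_pos ht0 E).le
    push_cast
    rw [show E + (k+1) = (E + k) + 1 from rfl, pow_succ]
    nlinarith [ih', step']

lemma opt_lt {t : ℝ} (ht1 : 1 ≤ t) (j : ℕ) (k : ℕ)
    (h1 : ((j:ℝ) + k) * t ≤ (j:ℝ) + k + 1) :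
    ((j : ℝ) + 1) * t ^ (j + k) ≤ ((j:ℝ) + k + 1) * t ^ j := by
  have ht0 : (0:ℝ) < t := lt_of_lt_of_le one_pos ht1
  induction k with
  | zero => simp
  | succ k ih =>
    have hE : ((j:ℝ) + k) * t ≤ (j:ℝ) + k + 1 := by push_cast at h1 ⊢; nlinarith
    have ihk := ih hE
    have ihk' := mul_le_mul_of_nonneg_right ihk (le_of_lt ht0)
    have hstep : ((j:ℝ)+k+1) * t ≤ (j:ℝ)+k+2 := by push_cast at h1; nlinarith
    have hstep' := mul_le_mul_of_nonneg_right hstep (pow_pos ht0 j).le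
    push_cast
    rw [show j + (k+1) = (j + k) + 1 from rfl, pow_succ]
    nlinarith [ihk', hstep']

lemma opt_main {t : ℝ} (ht1 : 1 ≤ t) (E j : ℕ)
    (h1 : (E : ℝ) * t ≤ (E:ℝ) + 1) (h2 : (E : ℝ) + 2 ≤ ((E : ℝ) + 1) * t) :
    ((j : ℝ) + 1) * t ^ E ≤ ((E : ℝ) + 1) * t ^ j := by
  have ht0 : (0:ℝ) < t := lt_of_lt_of_le one_pos ht1
  rcases le_total j E with hje | hej
  · obtain ⟨k, rfl⟩ := Nat.exists_eq_add_of_le hje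
    have h1' : ((j:ℝ) + k) * t ≤ (j:ℝ) + k + 1 := by push_cast at h1 ⊢; linarith
    have := opt_lt ht1 j k h1'
    push_cast at this ⊢
    linarith
  · obtain ⟨k, rfl⟩ := Nat.exists_eq_add_of_le hej
    have := opt_ge ht0 h2 k
    push_cast at this ⊢
    linarith

end Opt

section Interp

lemma sum_update_sub {α : Type*} [DecidableEq α] (S : Finset α) (w hi : α → ℕ) {a : α}
    (haS : a ∈ S) (ha1 : 1 ≤ hi a) :
    ∑ b ∈ S, w b * (Function.update hi a (hi a - 1)) b = (∑ b ∈ S, w b * hi b) - w a ∧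
    w a ≤ ∑ b ∈ S, w b * hi b := by
  rw [← Finset.add_sum_erase S _ haS, ← Finset.add_sum_erase S (fun b => w b * hi b) haS]
  have heq : ∑ b ∈ S.erase a, w b * (Function.update hi a (hi a - 1)) b
      = ∑ b ∈ S.erase a, w b * hi b := by
    apply Finset.sum_congr rfl
    intro b hb
    rw [Function.update_of_ne (Finset.ne_of_mem_erase hb)]
  rw [heq, Function.update_self]
  constructor
  · have key : w a * (hi a - 1) = w a * hi a - w a := by
      cases' Nat.exists_eq_add_of_le ha1 with m hm
      rw [hm, Nat.add_sub_cancel_left, Nat.mul_add, mul_one, Nat.add_sub_cancel_left]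
    have h2 : w a ≤ w a * hi a := Nat.le_mul_of_pos_right _ ha1
    omega
  · calc w a ≤ w a * hi a := Nat.le_mul_of_pos_right _ ha1
      _ ≤ _ := Nat.le_add_right _ _

lemma interp {α : Type*} [DecidableEq α] (S : Finset α) (w lo : α → ℕ)
    (hw : ∀ a ∈ S, 0 < w a)
    (N : ℕ) (h1 : ∑ a ∈ S, w a * lo a < N) :
    ∀ M : ℕ, ∀ hi : α → ℕ, ∑ a ∈ S, w a * hi a = M →
      (∀ a ∈ S, lo a ≤ hi a) → N ≤ ∑ a ∈ S, w a * hi a →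
    ∃ E : α → ℕ, (∀ a ∈ S, lo a ≤ E a ∧ E a ≤ hi a) ∧
      ∃ a ∈ S, lo a < E a ∧ N ≤ ∑ b ∈ S, w b * E b ∧ ∑ b ∈ S, w b * E b < N + w a := by
  intro M
  induction M using Nat.strong_induction_on with
  | _ M IH =>
    intro hi hM hlh hN
    by_cases hcase : ∃ a ∈ S, lo a < hi a ∧
        N ≤ ∑ b ∈ S, w b * (Function.update hi a (hi a - 1)) b
    · obtain ⟨a, haS, hlt, hge⟩ := hcase
      obtain ⟨hkey, hle⟩ := sum_update_sub S w hi haS (by omega)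
      set hi' := Function.update hi a (hi a - 1) with hhi'
      have hlh' : ∀ b ∈ S, lo b ≤ hi' b := by
        intro b hb
        by_cases hba : b = a
        · subst hba; rw [hhi', Function.update_self]; omega
        · rw [hhi', Function.update_of_ne hba]; exact hlh b hb
      have hwa := hw a haS
      have hlt' : ∑ b ∈ S, w b * hi' b < M := by omega
      obtain ⟨E, hEb, b, hbS, hres⟩ := IH _ hlt' hi' rfl hlh' hge
      refine ⟨E, fun c hc => ⟨(hEb c hc).1, le_trans (hEb c hc).2 ?_⟩, b, hbS, hres⟩
      by_cases hca : c = a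
      · subst hca; rw [hhi', Function.update_self]; omega
      · rw [hhi', Function.update_of_ne hca]
    · push_neg at hcase
      have hex : ∃ a ∈ S, lo a < hi a := by
        by_contra hno
        push_neg at hno
        have : ∑ a ∈ S, w a * hi a ≤ ∑ a ∈ S, w a * lo a := by
          apply Finset.sum_le_sum
          intro b hb
          exact Nat.mul_le_mul_left _ (hno b hb)
        omega
      obtain ⟨a, haS, hlt⟩ := hex
      have hup := hcase a haS hlt
      obtain ⟨hkey, hle⟩ := sum_update_sub S w hi haS (by omega)
      refine ⟨hi, fun b hb => ⟨hlh b hb, le_rfl⟩, a, haS, hlt, hN, ?_⟩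
      omega

end Interp

section Core
variable {Fq : Type} [Field Fq] [DecidableEq Fq]

lemma sshc_core {y : ℝ} (hy : 1 ≤ y)
    (S : Finset Fq[X]) (hS : ∀ P ∈ S, P.Monic ∧ Irreducible P) (E : Fq[X] → ℕ)
    (hsupp : ∀ P, P ∉ S → E P = 0)
    (hopt : ∀ P : Fq[X], P.Monic → Irreducible P →
      (E P : ℝ) * y ^ P.natDegree ≤ (E P : ℝ) + 1 ∧
      (E P : ℝ) + 2 ≤ ((E P : ℝ) + 1) * y ^ P.natDegree)
    (f : Fq[X]) (hf : f.Monic) :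
    (tau f : ℝ) * y ^ ((∏ P ∈ S, P ^ E P).natDegree) ≤
      (tau (∏ P ∈ S, P ^ E P) : ℝ) * y ^ f.natDegree := by
  classical
  set m := normalizedFactors f with hm
  set F := m.toFinset with hF
  set U := F ∪ S with hU
  have hUS : S ⊆ U := Finset.subset_union_right
  have hUF : F ⊆ U := Finset.subset_union_left
  have hUirr : ∀ P ∈ U, P.Monic ∧ Irreducible P := by
    intro P hP
    rcases Finset.mem_union.mp hP with h | h
    · have hmem := Multiset.mem_toFinset.mp h
      exact ⟨monic_of_normalized (irreducible_of_normalized_factor P hmem).ne_zero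
          (normalize_normalized_factor P hmem), irreducible_of_normalized_factor P hmem⟩
    · exact hS P h
  have htauf : tau f = ∏ P ∈ U, (m.count P + 1) := by
    rw [tau_formula f hf, ← hm, ← hF]
    apply Finset.prod_subset hUF
    intro P hP hP'
    rw [Multiset.count_eq_zero.mpr (fun h => hP' (Multiset.mem_toFinset.mpr h))]
    rfl
  have htauh : tau (∏ P ∈ S, P ^ E P) = ∏ P ∈ U, (E P + 1) := by
    rw [tau_prod_pow S E hS]
    apply Finset.prod_subset hUS
    intro P hP hP'
    rw [hsupp P hP']
    rfl
  have hdegf : f.natDegree = ∑ P ∈ U, m.count P * P.natDegree := by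
    rw [deg_eq_sum_nf hf, ← hm, ← hF]
    apply Finset.sum_subset hUF
    intro P hP hP'
    rw [Multiset.count_eq_zero.mpr (fun h => hP' (Multiset.mem_toFinset.mpr h)), zero_mul]
  have hdegh : (∏ P ∈ S, P ^ E P).natDegree = ∑ P ∈ U, E P * P.natDegree := by
    rw [deg_prod_pow S E (fun P hP => (hS P hP).1)]
    apply Finset.sum_subset hUS
    intro P hP hP'
    rw [hsupp P hP', zero_mul]
  rw [htauf, htauh, hdegf, hdegh]
  rw [← Finset.prod_pow_eq_pow_sum U (fun P => E P * P.natDegree) y,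
    ← Finset.prod_pow_eq_pow_sum U (fun P => m.count P * P.natDegree) y]
  push_cast
  rw [← Finset.prod_mul_distrib, ← Finset.prod_mul_distrib]
  apply Finset.prod_le_prod
  · intro P hP
    have h0 : (0:ℝ) < y := lt_of_lt_of_le one_pos hy
    positivity
  · intro P hP
    obtain ⟨hmon, hirr⟩ := hUirr P hP
    obtain ⟨h1, h2⟩ := hopt P hmon hirr
    have e1 : y ^ (E P * P.natDegree) = (y ^ P.natDegree) ^ (E P) := by
      rw [mul_comm, pow_mul]
    have e2 : y ^ (m.count P * P.natDegree) = (y ^ P.natDegree) ^ (m.count P) := by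
      rw [mul_comm, pow_mul]
    rw [e1, e2]
    exact opt_main (one_le_pow₀ hy) (E P) (m.count P) h1 h2

end Core

section Search

open Classical in
/-- Largest `e ≤ N` with `e * y^d ≤ e + 1`. -/
noncomputable def Ehi (N : ℕ) (y : ℝ) (d : ℕ) : ℕ :=
  Nat.findGreatest (fun e => (e : ℝ) * y ^ d ≤ (e : ℝ) + 1) N

open Classical in
/-- Largest `e ≤ N` with `e * y^d < e + 1`. -/
noncomputable def Elo (N : ℕ) (y : ℝ) (d : ℕ) : ℕ :=
  Nat.findGreatest (fun e => (e : ℝ) * y ^ d < (e : ℝ) + 1) N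

lemma Q_down {t : ℝ} (ht : 1 ≤ t) {e e' : ℕ} (hee : e ≤ e')
    (h : (e' : ℝ) * t ≤ (e' : ℝ) + 1) : (e : ℝ) * t ≤ (e : ℝ) + 1 := by
  have hc : (e : ℝ) ≤ e' := by exact_mod_cast hee
  nlinarith [mul_le_mul_of_nonneg_right hc (sub_nonneg.mpr ht)]

lemma Q'_down {t : ℝ} (ht : 1 ≤ t) {e e' : ℕ} (hee : e ≤ e')
    (h : (e' : ℝ) * t < (e' : ℝ) + 1) : (e : ℝ) * t < (e : ℝ) + 1 := by
  have hc : (e : ℝ) ≤ e' := by exact_mod_cast hee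
  nlinarith [mul_le_mul_of_nonneg_right hc (sub_nonneg.mpr ht)]

lemma Ehi_le (N : ℕ) (y : ℝ) (d : ℕ) : Ehi N y d ≤ N := Nat.findGreatest_le N

lemma Elo_le (N : ℕ) (y : ℝ) (d : ℕ) : Elo N y d ≤ N := Nat.findGreatest_le N

lemma Q_Ehi (N : ℕ) (y : ℝ) (d : ℕ) :
    (Ehi N y d : ℝ) * y ^ d ≤ (Ehi N y d : ℝ) + 1 := by
  classical
  exact Nat.findGreatest_spec (P := fun e => (e : ℝ) * y ^ d ≤ (e : ℝ) + 1)
    (Nat.zero_le N) (by norm_num)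

lemma Q'_Elo (N : ℕ) (y : ℝ) (d : ℕ) :
    (Elo N y d : ℝ) * y ^ d < (Elo N y d : ℝ) + 1 := by
  classical
  exact Nat.findGreatest_spec (P := fun e => (e : ℝ) * y ^ d < (e : ℝ) + 1)
    (Nat.zero_le N) (by norm_num)

lemma Q_of_le_Ehi {N : ℕ} {y : ℝ} (hy : 1 ≤ y) {d e : ℕ} (he : e ≤ Ehi N y d) :
    (e : ℝ) * y ^ d ≤ (e : ℝ) + 1 :=
  Q_down (one_le_pow₀ hy) he (Q_Ehi N y d)

lemma le_Ehi_of_Q {N : ℕ} {y : ℝ} {d e : ℕ} (heN : e ≤ N)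
    (h : (e : ℝ) * y ^ d ≤ (e : ℝ) + 1) : e ≤ Ehi N y d := by
  classical
  exact Nat.le_findGreatest heN h

lemma le_Elo_of_Q' {N : ℕ} {y : ℝ} {d e : ℕ} (heN : e ≤ N)
    (h : (e : ℝ) * y ^ d < (e : ℝ) + 1) : e ≤ Elo N y d := by
  classical
  exact Nat.le_findGreatest heN h

/-- Above the top `N`, the weak inequality fails when `y ≥ 1 + 1/N` and `d ≥ 1`. -/
lemma top_fail {N : ℕ} (hN : 0 < N) {y : ℝ} (hy : 1 + 1/(N:ℝ) ≤ y) {d : ℕ} (hd : d ≠ 0)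
    {e : ℕ} (he : N ≤ e) : ¬ (((e:ℝ) + 1) * y ^ d < ((e:ℝ) + 1) + 1) := by
  have hN0 : (0:ℝ) < N := by exact_mod_cast hN
  have hy1 : (1:ℝ) ≤ y := by
    have h0 : (0:ℝ) ≤ 1/(N:ℝ) := by positivity
    linarith
  have hyd : 1 + 1/(N:ℝ) ≤ y ^ d := le_trans hy (le_self_pow₀ hy1 hd)
  have hce : (N:ℝ) ≤ e := by exact_mod_cast he
  intro hcon
  have h1 : ((e:ℝ) + 1) * (1 + 1/(N:ℝ)) ≤ ((e:ℝ) + 1) * y ^ d :=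
    mul_le_mul_of_nonneg_left hyd (by positivity)
  have h2 : ((e:ℝ) + 1) * (1 + 1/(N:ℝ)) = (e:ℝ) + 1 + ((e:ℝ)+1)/N := by ring
  have h3 : (1:ℝ) ≤ ((e:ℝ)+1)/N := by
    rw [le_div_iff₀ hN0]
    linarith
  linarith

/-- `¬ Q' (e+1)` for any `e` between `Elo` and `N`. -/
lemma notQ'_succ {N : ℕ} (hN : 0 < N) {y : ℝ} (hy : 1 + 1/(N:ℝ) ≤ y) {d : ℕ} (hd : d ≠ 0)
    {e : ℕ} (helo : Elo N y d ≤ e) :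
    ((e:ℝ) + 1) + 1 ≤ ((e:ℝ) + 1) * y ^ d := by
  classical
  by_contra hcon
  push_neg at hcon
  rcases le_or_gt (e+1) N with hle | hgt
  · exact absurd (show (((e+1:ℕ)):ℝ) * y ^ d < ((e+1:ℕ):ℝ) + 1 by push_cast; linarith)
      (Nat.findGreatest_is_greatest (Nat.lt_succ_of_le helo) hle)
  · exact top_fail hN hy hd (by omega) hcon

lemma notQ'_of_lt_le {N : ℕ} (hN : 0 < N) {y : ℝ} {d e : ℕ}
    (hlo : Elo N y d < e) (heN : e ≤ N) :
    ¬ ((e:ℝ) * y ^ d < (e:ℝ) + 1) :=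
  Nat.findGreatest_is_greatest hlo heN

lemma Elo_le_Ehi (N : ℕ) (y : ℝ) (d : ℕ) : Elo N y d ≤ Ehi N y d :=
  le_Ehi_of_Q (Elo_le N y d) (le_of_lt (Q'_Elo N y d))

/-- `(b ^ (1/d)) ^ d = b`. -/
lemma rpow_inv_natpow {b : ℝ} (hb : 0 ≤ b) {d : ℕ} (hd : d ≠ 0) :
    (b ^ ((d:ℝ)⁻¹)) ^ d = b := by
  have hd' : ((d:ℝ)) ≠ 0 := Nat.cast_ne_zero.mpr hd
  rw [← Real.rpow_natCast (b ^ ((d:ℝ)⁻¹)) d, ← Real.rpow_mul hb,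
    inv_mul_cancel₀ hd', Real.rpow_one]

lemma theta_pos {d e : ℕ} (he : 0 < e) : (0:ℝ) < (((e:ℝ)+1)/e) ^ ((d:ℝ)⁻¹) := by
  have he' : (0:ℝ) < e := by exact_mod_cast he
  apply Real.rpow_pos_of_pos
  positivity

lemma lt_theta_iff {y : ℝ} (hy : 0 ≤ y) {d e : ℕ} (hd : d ≠ 0) (he : 0 < e) :
    y < (((e:ℝ)+1)/e) ^ ((d:ℝ)⁻¹) ↔ (e:ℝ) * y ^ d < (e:ℝ) + 1 := by
  have he' : (0:ℝ) < e := by exact_mod_cast he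
  have hb : (0:ℝ) ≤ ((e:ℝ)+1)/e := by positivity
  constructor
  · intro h
    have := pow_lt_pow_left₀ h hy hd
    rw [rpow_inv_natpow hb hd] at this
    rw [lt_div_iff₀ he'] at this
    nlinarith
  · intro h
    have h1 : y ^ d < ((e:ℝ)+1)/e := by
      rw [lt_div_iff₀ he']
      nlinarith
    by_contra hcon
    push_neg at hcon
    have := pow_le_pow_left₀ (le_of_lt (theta_pos he)) hcon d
    rw [rpow_inv_natpow hb hd] at this
    linarith

lemma theta_le_of_le {z : ℝ} (hz : 0 ≤ z) {d e : ℕ} (hd : d ≠ 0) (he : 0 < e)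
    (h : z ≤ (((e:ℝ)+1)/e) ^ ((d:ℝ)⁻¹)) : (e:ℝ) * z ^ d ≤ (e:ℝ) + 1 := by
  have he' : (0:ℝ) < e := by exact_mod_cast he
  have hb : (0:ℝ) ≤ ((e:ℝ)+1)/e := by positivity
  have := pow_le_pow_left₀ hz h d
  rw [rpow_inv_natpow hb hd] at this
  rw [le_div_iff₀ he'] at this
  nlinarith

end Search

section Mirr
variable (Fq : Type) [Field Fq] [Fintype Fq]

lemma finite_mirr (N : ℕ) :
    {p : Fq[X] | p.Monic ∧ Irreducible p ∧ p.natDegree ≤ N}.Finite := by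
  apply Set.Finite.of_finite_image (f := fun p => fun i : Fin (N+1) => p.coeff i)
  · exact Set.toFinite _
  · intro p hp q hq hpq
    simp only [Set.mem_setOf_eq] at hp hq
    ext n
    by_cases hn : n ≤ N
    · exact congrFun hpq ⟨n, Nat.lt_succ_of_le hn⟩
    · rw [Polynomial.coeff_eq_zero_of_natDegree_lt (by omega),
        Polynomial.coeff_eq_zero_of_natDegree_lt (by omega)]

/-- The finite set of monic irreducible polynomials of degree at most `N`. -/
noncomputable def mirr (N : ℕ) : Finset Fq[X] := (finite_mirr Fq N).toFinset

lemma mem_mirr {N : ℕ} {P : Fq[X]} :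
    P ∈ mirr Fq N ↔ P.Monic ∧ Irreducible P ∧ P.natDegree ≤ N := by
  rw [mirr, Set.Finite.mem_toFinset, Set.mem_setOf_eq]

lemma X_mem_mirr {N : ℕ} (hN : 0 < N) : (X : Fq[X]) ∈ mirr Fq N := by
  rw [mem_mirr]
  exact ⟨monic_X, irreducible_X, by rw [natDegree_X]; omega⟩

end Mirr

end AuxMachinery

/-- Every positive integer `N` can be written as `deg h - u` where `h` is an `x`-SSHC
polynomial for some `x = s log q / log(1 + 1/r) ∈ S` and `0 ≤ u ≤ s - 1`. -/
theorem every_degree_reachable {Fq : Type} [Field Fq] [Fintype Fq] (N : ℕ) (hN : 0 < N) :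
    ∃ s r : ℕ, 0 < s ∧ 0 < r ∧
      ∃ h : Fq[X],
        IsSSHC ((s : ℝ) * Real.log (Fintype.card Fq) / Real.log (1 + 1 / (r : ℝ))) h ∧
        ∃ u : ℕ, u ≤ s - 1 ∧ N + u = h.natDegree := by
    classical
  have hNR : (0:ℝ) < N := by exact_mod_cast hN
  set θ : ℕ × ℕ → ℝ := fun p => (((p.2:ℝ)+1)/(p.2:ℝ)) ^ ((p.1:ℝ)⁻¹) with hθdef
  set M : Finset Fq[X] := mirr Fq N with hMdef
  have hMdeg : ∀ P ∈ M, 0 < P.natDegree := by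
    intro P hP
    rw [hMdef, mem_mirr] at hP
    exact hP.2.1.natDegree_pos
  set T : Finset (ℕ × ℕ) := (Finset.range (N+1) ×ˢ Finset.range (N+1)).filter
      (fun p => 0 < p.1 ∧ 0 < p.2 ∧ 1 + 1/(N:ℝ) ≤ θ p ∧
        N ≤ ∑ P ∈ M, P.natDegree * Ehi N (θ p) P.natDegree) with hTdef
  have hθ1N : θ (1, N) = 1 + 1/(N:ℝ) := by
    show (((N:ℝ)+1)/(N:ℝ)) ^ (((1:ℕ):ℝ))⁻¹ = _
    rw [Nat.cast_one, inv_one, Real.rpow_one]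
    field_simp
  have hmemT : (1, N) ∈ T := by
    rw [hTdef, Finset.mem_filter, Finset.mem_product]
    refine ⟨⟨Finset.mem_range.mpr (by omega), Finset.mem_range.mpr (by omega)⟩,
      by norm_num, hN, le_of_eq hθ1N.symm, ?_⟩
    rw [hθ1N]
    have hEN : N ≤ Ehi N (1 + 1/(N:ℝ)) 1 := by
      apply le_Ehi_of_Q le_rfl
      rw [pow_one]
      have : (N:ℝ) * (1 + 1/(N:ℝ)) = N + 1 := by field_simp
      rw [this]
    calc N ≤ natDegree (X : Fq[X]) * Ehi N (1 + 1/(N:ℝ)) (natDegree (X : Fq[X])) := by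
          rw [natDegree_X, one_mul]; exact hEN
      _ ≤ _ := Finset.single_le_sum (f := fun P : Fq[X] => P.natDegree * Ehi N (1 + 1/(N:ℝ)) P.natDegree)
          (fun P _ => Nat.zero_le _) (by rw [hMdef]; exact X_mem_mirr Fq hN)
  obtain ⟨p₀, hp₀T, hmax⟩ := Finset.exists_max_image T θ ⟨(1, N), hmemT⟩
  have hp₀T' := hp₀T
  rw [hTdef, Finset.mem_filter] at hp₀T'
  obtain ⟨hp₀rng, hd₀, he₀, hy0, hDhiy⟩ := hp₀T'
  set y := θ p₀ with hydef
  have hy1 : (1:ℝ) < y := by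
    have h0 : (0:ℝ) < 1/(N:ℝ) := by positivity
    linarith
  have hy1' : (1:ℝ) ≤ y := le_of_lt hy1
  have hy0' : (0:ℝ) ≤ y := by linarith
  -- Step 1 : Dlo < N
  have hDloLT : ∑ P ∈ M, P.natDegree * Elo N y P.natDegree < N := by
    by_contra hgeC
    push_neg at hgeC
    set C : Finset (ℕ × ℕ) := (Finset.range (N+1) ×ˢ Finset.range (N+1)).filter
        (fun p => 0 < p.1 ∧ 0 < p.2 ∧ (∃ P ∈ M, P.natDegree = p.1) ∧
          p.2 ≤ Elo N y p.1) with hCdef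
    have hpairC : ∀ P ∈ M, 0 < Elo N y P.natDegree →
        (P.natDegree, Elo N y P.natDegree) ∈ C := by
      intro P hP hpos
      rw [hCdef, Finset.mem_filter, Finset.mem_product]
      have hdeg : P.natDegree ≤ N := by
        rw [hMdef, mem_mirr] at hP
        exact hP.2.2
      exact ⟨⟨Finset.mem_range.mpr (by omega),
        Finset.mem_range.mpr (Nat.lt_succ_of_le (Elo_le N y P.natDegree))⟩,
        hMdeg P hP, hpos, ⟨P, hP, rfl⟩, le_rfl⟩
    have hCne : C.Nonempty := by
      have hex : ∃ P ∈ M, 0 < Elo N y P.natDegree := by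
        by_contra hno
        push_neg at hno
        have hzero : ∑ P ∈ M, P.natDegree * Elo N y P.natDegree = 0 := by
          apply Finset.sum_eq_zero
          intro P hP
          have h0 := hno P hP
          rw [Nat.le_zero] at h0
          rw [h0, mul_zero]
        omega
      obtain ⟨P, hP, hpos⟩ := hex
      exact ⟨_, hpairC P hP hpos⟩
    obtain ⟨z, hzC, hzmin⟩ := Finset.exists_min_image C θ hCne
    have hzC' := hzC
    rw [hCdef, Finset.mem_filter, Finset.mem_product] at hzC'
    obtain ⟨⟨hz1rng, hz2rng⟩, hz1, hz2, hzdeg, hzelo⟩ := hzC'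
    -- Q' holds at (z.1, z.2) for y, so y < θ z
    have hQ'z : (z.2:ℝ) * y ^ z.1 < (z.2:ℝ) + 1 :=
      Q'_down (one_le_pow₀ hy1') hzelo (Q'_Elo N y z.1)
    have hyθz : y < θ z := by
      rw [hθdef]
      exact (lt_theta_iff hy0' (Nat.pos_iff_ne_zero.mp hz1) hz2).mpr hQ'z
    have hθz0 : (0:ℝ) ≤ θ z := le_trans hy0' (le_of_lt hyθz)
    -- Dhi at θ z dominates Dlo at y
    have hdom : ∀ P ∈ M, Elo N y P.natDegree ≤ Ehi N (θ z) P.natDegree := by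
      intro P hP
      rcases Nat.eq_zero_or_pos (Elo N y P.natDegree) with h0 | hpos
      · omega
      · have hmemC := hpairC P hP hpos
        have hθle := hzmin _ hmemC
        apply le_Ehi_of_Q (Elo_le N y P.natDegree)
        exact theta_le_of_le hθz0 (Nat.pos_iff_ne_zero.mp (hMdeg P hP)) hpos hθle
    have hDhiz : N ≤ ∑ P ∈ M, P.natDegree * Ehi N (θ z) P.natDegree := by
      refine le_trans hgeC (Finset.sum_le_sum ?_)
      intro P hP
      exact Nat.mul_le_mul_left _ (hdom P hP)
    have hzT : z ∈ T := by
      rw [hTdef, Finset.mem_filter, Finset.mem_product]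
      exact ⟨⟨hz1rng, hz2rng⟩, hz1, hz2, le_trans hy0 (le_of_lt hyθz), hDhiz⟩
    exact absurd (hmax z hzT) (not_le.mpr hyθz)
  -- Step 2 : greedy interpolation
  obtain ⟨E₀, hE₀b, a, haM, haLo, hsum1, hsum2⟩ :=
    interp M (fun P => P.natDegree) (fun P => Elo N y P.natDegree) hMdeg N hDloLT
      (∑ P ∈ M, P.natDegree * Ehi N y P.natDegree) (fun P => Ehi N y P.natDegree) rfl
      (fun P _ => Elo_le_Ehi N y P.natDegree) hDhiy
  set s := a.natDegree with hsdef
  set r := E₀ a with hrdef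
  have hs : 0 < s := hMdeg a haM
  have hr : 0 < r := by omega
  have hrN : r ≤ N := le_trans (hE₀b a haM).2 (Ehi_le N y s)
  -- the tie equation
  have hQr : (r:ℝ) * y ^ s ≤ (r:ℝ) + 1 := Q_of_le_Ehi hy1' (hE₀b a haM).2
  have htie : (r:ℝ) * y ^ s = (r:ℝ) + 1 :=
    le_antisymm hQr (not_lt.mp (notQ'_of_lt_le hN haLo hrN))
  have hr0 : (0:ℝ) < r := by exact_mod_cast hr
  have hys : y ^ s = 1 + 1/(r:ℝ) := by
    field_simp
    field_simp at htie
    linarith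
  -- the exponent function
  set E : Fq[X] → ℕ := fun P => if P ∈ M then E₀ P else 0 with hEdef
  have hopt : ∀ P : Fq[X], P.Monic → Irreducible P →
      (E P : ℝ) * y ^ P.natDegree ≤ (E P : ℝ) + 1 ∧
      (E P : ℝ) + 2 ≤ ((E P : ℝ) + 1) * y ^ P.natDegree := by
    intro P hmon hirr
    by_cases hP : P ∈ M
    · rw [hEdef]
      simp only [if_pos hP]
      constructor
      · exact Q_of_le_Ehi hy1' (hE₀b P hP).2
      · have := notQ'_succ hN hy0 (Nat.pos_iff_ne_zero.mp (hMdeg P hP))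
          (le_trans (hE₀b P hP).1 le_rfl) (e := E₀ P)
        linarith [this]
    · rw [hEdef]
      simp only [if_neg hP]
      have hdeg : N < P.natDegree := by
        by_contra hle
        push_neg at hle
        exact hP (by rw [hMdef, mem_mirr]; exact ⟨hmon, hirr, hle⟩)
      have h2 : (2:ℝ) ≤ y ^ P.natDegree := by
        have hb : (1:ℝ) + 1/(N:ℝ) ≤ y := hy0
        have h1 : ((1:ℝ) + 1/(N:ℝ)) ^ P.natDegree ≤ y ^ P.natDegree :=
          pow_le_pow_left₀ (by positivity) hb _
        have h2' : (1:ℝ) + P.natDegree * (1/(N:ℝ)) ≤ ((1:ℝ) + 1/(N:ℝ)) ^ P.natDegree :=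
          one_add_mul_le_pow (le_trans (by norm_num : (-2:ℝ) ≤ 0) (by positivity)) _
        have h3 : (2:ℝ) ≤ 1 + (P.natDegree:ℝ) * (1/(N:ℝ)) := by
          have hc : (N:ℝ) + 1 ≤ (P.natDegree:ℝ) := by exact_mod_cast hdeg
          have h4 : (1:ℝ) ≤ (P.natDegree:ℝ) / N := by
            rw [le_div_iff₀ hNR]; linarith
          rw [mul_one_div]; linarith
        linarith
      constructor
      · simp
      · simp only [Nat.cast_zero, zero_add, one_mul]
        exact h2
  -- the polynomial h
  set h : Fq[X] := ∏ P ∈ M, P ^ E P with hhdef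
  have hMirr : ∀ P ∈ M, P.Monic ∧ Irreducible P := by
    intro P hP
    rw [hMdef, mem_mirr] at hP
    exact ⟨hP.1, hP.2.1⟩
  have hmonh : h.Monic := monic_prod_pow M E (fun P hP => (hMirr P hP).1)
  have hdegh : h.natDegree = ∑ P ∈ M, P.natDegree * E₀ P := by
    rw [hhdef, deg_prod_pow M E (fun P hP => (hMirr P hP).1)]
    apply Finset.sum_congr rfl
    intro P hP
    rw [hEdef]
    simp only [if_pos hP]
    ring
  have hdegh1 : N ≤ h.natDegree := by rw [hdegh]; exact hsum1
  have hdegh2 : h.natDegree < N + s := by rw [hdegh]; exact hsum2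
  -- final assembly
  refine ⟨s, r, hs, hr, h, ?_, h.natDegree - N, by omega, by omega⟩
  constructor
  · exact hmonh
  intro f hf
  -- the core inequality
  have hcore := sshc_core hy1' M hMirr E
    (fun P hP => by rw [hEdef]; simp [if_neg hP]) hopt f hf
  rw [← hhdef] at hcore
  -- positivity facts
  have hq1 : (1:ℝ) < (Fintype.card Fq : ℝ) := by
    exact_mod_cast Fintype.one_lt_card
  have hq0 : (0:ℝ) < (Fintype.card Fq : ℝ) := by linarith
  have hlogq : 0 < Real.log (Fintype.card Fq) := Real.log_pos hq1
  have hr1 : (1:ℝ) < 1 + 1/(r:ℝ) := by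
    have : (0:ℝ) < 1/(r:ℝ) := by positivity
    linarith
  have hlogr : 0 < Real.log (1 + 1/(r:ℝ)) := Real.log_pos hr1
  set x : ℝ := (s : ℝ) * Real.log (Fintype.card Fq) / Real.log (1 + 1/(r:ℝ)) with hxdef
  have hsR : (0:ℝ) < s := by exact_mod_cast hs
  have hx : 0 < x := div_pos (mul_pos hsR hlogq) hlogr
  have hy0'' : (0:ℝ) < y := lt_trans one_pos hy1
  have hlogy : Real.log y = Real.log (1 + 1/(r:ℝ)) / s := by
    rw [← hys, Real.log_pow]
    field_simp
  -- key rpow computation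
  have hkey : ∀ n : ℕ, (Fintype.card Fq : ℝ) ^ (-(n:ℝ)/x) = (y ^ n)⁻¹ := by
    intro n
    rw [Real.rpow_def_of_pos hq0]
    have harg : Real.log (Fintype.card Fq) * (-(n:ℝ)/x) = -(n:ℝ) * Real.log y := by
      rw [hlogy, hxdef]
      field_simp
    rw [harg]
    rw [show -(n:ℝ) * Real.log y = Real.log y * (-(n:ℝ)) by ring]
    rw [← Real.rpow_def_of_pos hy0'']
    rw [Real.rpow_neg (le_of_lt hy0''), Real.rpow_natCast]
  rw [hkey, hkey]
  -- convert to the core inequality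
  have hpf : (0:ℝ) < y ^ f.natDegree := pow_pos hy0'' _
  have hph : (0:ℝ) < y ^ h.natDegree := pow_pos hy0'' _
  rw [← div_eq_mul_inv, ← div_eq_mul_inv, div_le_div_iff₀ hpf hph]
  linarith [hcore]
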